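/- Let H ∈ ℝ^{d×p} have full row rank and let ≺ be a partial order on {1,...,d}. Then there exists a decomposition H = R Q where R ∈ ℝ^{d×d} satisfies R_{ii} ≥ 0 and R_{ij} = 0 unless i ⪯ j, and each row q_i of Q ∈ ℝ^{d×p} has unit norm and is orthogonal to the span of {q_j : i ≺ j}. -/

import Mathlib

open Submodule Finsupp

set_option maxHeartbeats 1000000

/-- Existence of the partial order RQ decomposition: for `H ∈ ℝ^{d×p}` of full
row rank and a partial order `r` on `{1,…,d}`, there are `R ∈ ℝ^{d×d}` with
`Rᵢᵢ ≥ 0` and `Rᵢⱼ = 0` unless `i ⪯ j`, and `Q ∈ ℝ^{d×p}` whose rows have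
unit norm and satisfy `qᵢ ⊥ qⱼ` whenever `i ≺ j`, such that `H = R Q`. -/
theorem stmt6 (d p : ℕ) (H : Matrix (Fin d) (Fin p) ℝ) (hH : H.rank = d)
    (r : Fin d → Fin d → Prop) (hr : IsPartialOrder (Fin d) r) :
    ∃ (R : Matrix (Fin d) (Fin d) ℝ) (Q : Matrix (Fin d) (Fin p) ℝ),
      H = R * Q ∧
      (∀ i, 0 ≤ R i i) ∧
      (∀ i j, ¬ r i j → R i j = 0) ∧
      (∀ i, ∑ x, Q i x ^ 2 = 1) ∧
      (∀ i j, r i j → i ≠ j → ∑ x, Q i x * Q j x = 0) := by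
  classical
  have hrefl := hr.refl
  have htrans := hr.trans
  have hantisymm := hr.antisymm
  -- linear independence of the rows, as plain functions
  have hli0 : LinearIndependent ℝ (fun i => H i : Fin d → (Fin p → ℝ)) := by
    rw [linearIndependent_iff_card_eq_finrank_span]
    have h1 := H.rank_eq_finrank_span_row
    rw [hH] at h1
    simp only [Set.finrank, Fintype.card_fin]; exact h1
  -- rows in Euclidean space
  let e : (Fin p → ℝ) ≃ₗ[ℝ] EuclideanSpace ℝ (Fin p) := (WithLp.linearEquiv 2 ℝ (Fin p → ℝ)).symm
  let h : Fin d → EuclideanSpace ℝ (Fin p) := fun i => e (H i)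
  have hli : LinearIndependent ℝ h :=
    hli0.map' e.toLinearMap e.ker
  -- the strictly-above sets
  let s : Fin d → Set (Fin d) := fun i => {j | r i j ∧ i ≠ j}
  let V : Fin d → Submodule ℝ (EuclideanSpace ℝ (Fin p)) := fun i => Submodule.span ℝ (h '' s i)
  let u : Fin d → EuclideanSpace ℝ (Fin p) := fun i => h i - (orthogonalProjection (V i) (h i) : EuclideanSpace ℝ (Fin p))
  have hu_orth : ∀ i, u i ∈ (V i)ᗮ := fun i =>
    sub_starProjection_mem_orthogonal (K := V i) (h i)
  have hs_sub : ∀ i, s i ⊆ {i}ᶜ := by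
    rintro i j ⟨-, hne⟩
    simp [Ne.symm hne]
  have hu_ne : ∀ i, u i ≠ 0 := by
    intro i hui
    have hmem : h i ∈ V i := by
      have h2 := (orthogonalProjection (V i) (h i)).2
      rw [sub_eq_zero] at hui
      rw [hui]; exact h2
    exact hli.notMem_span_image (s := ({i}ᶜ : Set (Fin d))) (by simp)
      (Submodule.span_mono (Set.image_mono (hs_sub i)) hmem)
  let q : Fin d → EuclideanSpace ℝ (Fin p) := fun i => (‖u i‖⁻¹ : ℝ) • u i
  have hq_norm : ∀ i, ‖q i‖ = 1 := fun i => norm_smul_inv_norm (𝕜 := ℝ) (hu_ne i)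
  have hq_orth : ∀ i, q i ∈ (V i)ᗮ := fun i => Submodule.smul_mem _ _ (hu_orth i)
  -- monotonicity of the spans
  have hs_mono : ∀ i j, r i j → i ≠ j → s j ⊆ s i := by
    rintro i j hij hne k ⟨hjk, hnejk⟩
    refine ⟨htrans _ _ _ hij hjk, fun hik => ?_⟩
    exact hne (hantisymm _ _ hij (hik ▸ hjk))
  have hV_mono : ∀ i j, r i j → i ≠ j → V j ≤ V i := fun i j hij hne =>
    Submodule.span_mono (Set.image_mono (hs_mono i j hij hne))
  have hhV : ∀ i j, r i j → i ≠ j → h j ∈ V i := fun i j hij hne =>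
    Submodule.subset_span ⟨j, ⟨hij, hne⟩, rfl⟩
  have hqV : ∀ i j, r i j → i ≠ j → q j ∈ V i := by
    intro i j hij hne
    refine Submodule.smul_mem _ _ (Submodule.sub_mem _ (hhV i j hij hne) ?_)
    exact hV_mono i j hij hne (orthogonalProjection (V j) (h j)).2
  -- decomposition of h i
  have hu_smul : ∀ i, (‖u i‖ : ℝ) • q i = u i := fun i =>
    smul_inv_smul₀ (norm_ne_zero_iff.2 (hu_ne i)) (u i)
  have hdecomp : ∀ i, h i = (‖u i‖ : ℝ) • q i + (orthogonalProjection (V i) (h i) : EuclideanSpace ℝ (Fin p)) := by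
    intro i
    rw [hu_smul i]
    simp [u]
  -- key induction: h i lies in the span of the q_j with i ⪯ j
  have key : ∀ n (i : Fin d), (Finset.univ.filter (fun j => r i j ∧ i ≠ j)).card ≤ n →
      h i ∈ Submodule.span ℝ (q '' {j | r i j}) := by
    intro n
    induction n with
    | zero =>
      intro i hcard
      have hs_empty : s i = ∅ := by
        ext j
        simp only [Set.mem_empty_iff_false, iff_false]
        rintro ⟨hij, hne⟩
        have : j ∈ Finset.univ.filter (fun j => r i j ∧ i ≠ j) := by
          simp [hij, hne]
        have := Finset.card_pos.2 ⟨j, this⟩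
        omega
      have hVbot : V i ≤ Submodule.span ℝ (q '' {j | r i j}) := by
        rw [show V i = Submodule.span ℝ (h '' s i) from rfl, hs_empty]
        simp
      rw [hdecomp i]
      refine Submodule.add_mem _ (Submodule.smul_mem _ _ (Submodule.subset_span ?_))
        (hVbot (orthogonalProjection (V i) (h i)).2)
      exact ⟨i, hrefl i, rfl⟩
    | succ m ih =>
      intro i hcard
      have hVle : V i ≤ Submodule.span ℝ (q '' {j | r i j}) := by
        rw [Submodule.span_le]
        rintro v ⟨k, ⟨hik, hnik⟩, rfl⟩
        have hsub : Finset.univ.filter (fun j => r k j ∧ k ≠ j) ⊂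
            Finset.univ.filter (fun j => r i j ∧ i ≠ j) := by
          constructor
          · intro j hj
            simp only [Finset.mem_filter, Finset.mem_univ, true_and] at hj ⊢
            exact hs_mono i k hik hnik hj
          · intro hcon
            have : k ∈ Finset.univ.filter (fun j => r k j ∧ k ≠ j) := by
              apply hcon
              simp [hik, hnik]
            simp at this
        have hcard' : (Finset.univ.filter (fun j => r k j ∧ k ≠ j)).card ≤ m := by
          have := Finset.card_lt_card hsub
          omega
        have hk := ih k hcard'
        refine Submodule.span_mono (Set.image_mono ?_) hk
        intro l hl
        exact htrans _ _ _ hik hl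
      rw [hdecomp i]
      refine Submodule.add_mem _ (Submodule.smul_mem _ _ (Submodule.subset_span ?_))
        (hVle (orthogonalProjection (V i) (h i)).2)
      exact ⟨i, hrefl i, rfl⟩
  have key' : ∀ i, h i ∈ Submodule.span ℝ (q '' {j | r i j}) := fun i => key _ i le_rfl
  -- the projection lies in the span of the strictly-above q's
  have hproj : ∀ i, (orthogonalProjection (V i) (h i) : EuclideanSpace ℝ (Fin p)) ∈ Submodule.span ℝ (q '' s i) := by
    intro i
    have hVle : V i ≤ Submodule.span ℝ (q '' s i) := by
      rw [Submodule.span_le]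
      rintro v ⟨k, ⟨hik, hnik⟩, rfl⟩
      refine Submodule.span_mono (Set.image_mono ?_) (key' k)
      intro l hl
      refine ⟨htrans _ _ _ hik hl, fun hil => ?_⟩
      exact hnik (hantisymm _ _ hik (hil ▸ hl))
    exact hVle (orthogonalProjection (V i) (h i)).2
  -- extract coefficients
  have hcoef : ∀ i, ∃ l ∈ Finsupp.supported ℝ ℝ (s i),
      Finsupp.linearCombination ℝ q l = (orthogonalProjection (V i) (h i) : EuclideanSpace ℝ (Fin p)) := by
    intro i
    exact (Finsupp.mem_span_image_iff_linearCombination ℝ).1 (hproj i)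
  choose c hc_supp hc_eq using hcoef
  have hc_zero : ∀ i j, j ∉ s i → c i j = 0 := by
    intro i j hj
    by_contra hne
    exact hj (hc_supp i (Finsupp.mem_support_iff.2 hne))
  -- define R and Q
  refine ⟨Matrix.of fun i j => if i = j then ‖u i‖ else c i j,
    Matrix.of fun i x => q i x, ?_, ?_, ?_, ?_, ?_⟩
  · -- H = R * Q
    ext i x
    have hsum : h i = (‖u i‖ : ℝ) • q i + ∑ j, c i j • q j := by
      rw [hdecomp i, ← hc_eq i, Finsupp.linearCombination_apply,
        Finsupp.sum_fintype]
      intro j; simp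
    have hfx : H i x = (‖u i‖ : ℝ) * q i x + ∑ j, c i j * q j x := by
      have h3 : H i x = h i x := rfl
      rw [h3, hsum]
      show ((‖u i‖ : ℝ) • q i + ∑ j, c i j • q j) x = _
      rw [PiLp.add_apply, PiLp.smul_apply, smul_eq_mul]
      congr 1
      rw [show (((∑ j, c i j • q j : EuclideanSpace ℝ (Fin p))) x) = ∑ j, (c i j • q j : EuclideanSpace ℝ (Fin p)) x from by
        rw [WithLp.ofLp_sum, Finset.sum_apply]]
      exact Finset.sum_congr rfl fun j _ => by rw [PiLp.smul_apply, smul_eq_mul]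
    rw [hfx]
    simp only [Matrix.mul_apply, Matrix.of_apply]
    have hcii : c i i = 0 := hc_zero i i (by simp [s])
    have : ∀ j, (if i = j then ‖u i‖ else c i j) * q j x =
        (if i = j then (‖u i‖ : ℝ) * q j x else 0) + c i j * q j x := by
      intro j
      by_cases hij : i = j
      · subst hij; simp [hcii]
      · simp [hij]
    rw [Finset.sum_congr rfl (fun j _ => this j), Finset.sum_add_distrib,
      Finset.sum_ite_eq Finset.univ i (fun j => (‖u i‖ : ℝ) * q j x)]
    simp
  · -- diagonal nonneg
    intro i
    simp only [Matrix.of_apply, if_pos rfl]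
    exact norm_nonneg _
  · -- zero pattern
    intro i j hij
    have hne : i ≠ j := fun hEq => hij (hEq ▸ hrefl i)
    simp only [Matrix.of_apply, if_neg hne]
    exact hc_zero i j (fun hmem => hij hmem.1)
  · -- unit rows
    intro i
    have h1 : (∑ x, q i x * q i x) = (1 : ℝ) := by
      have hinner : (inner ℝ (q i) (q i) : ℝ) = ∑ x, q i x * q i x := by
        rw [PiLp.inner_apply]; simp [RCLike.inner_apply, pow_two]
      have := real_inner_self_eq_norm_sq (q i)
      rw [hinner, hq_norm i] at this
      simpa using this
    simpa [pow_two] using h1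
  · -- orthogonality
    intro i j hij hne
    have hq_mem : q j ∈ V i := hqV i j hij hne
    have : (inner ℝ (q i) (q j) : ℝ) = 0 := by
      have := (Submodule.mem_orthogonal' (V i) (q i)).1 (hq_orth i)
      exact this (q j) hq_mem
    rw [PiLp.inner_apply] at this
    simpa [RCLike.inner_apply, Finset.sum_congr rfl fun x _ => mul_comm (q j x) (q i x)] using this
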